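/- arXiv:2505.08615 — 3 statements merged into one kernel-verified Lean document; each statement's English description precedes it below -/
import Mathlib

section
/- Let (Ω, ℙ) be a probability space, let m, K, N, T be positive integers and τ ∈ [0, 1). Let f_t : Ω → ℝ^m (t = 1, …, T) and e_{i,t} : Ω → ℝ^K (i = 1, …, N, t = 1, …, T) be square-integrable random vectors, and set ē_t = N^{-1} Σ_{i=1}^N e_{i,t}. Assume that for each t the random vector f_t is independent of ē_t, and that (1/T^{1+τ}) Σ_{t=1}^T E‖f_t‖² ≤ C_f and (1/T) Σ_{t=1}^T E(‖√N ē_t‖²) ≤ C_e for constants C_f, C_e ≥ 0. Then for every ε > 0, ℙ( ‖ (1/T^{1+τ}) Σ_{t=1}^T f_t ē_t′ ‖_F > ε ) ≤ √(C_f · C_e) / (ε · √N · T^{τ/2}). In particular, ‖T^{-(1+τ)} Σ_t f_t ē_t′‖_F is bounded in probability at rate N^{-1/2} T^{-τ/2}. -/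
open MeasureTheory ProbabilityTheory

lemma eucl_sum_apply {ι κ : Type*} [Fintype κ] (s : Finset ι)
    (v : ι → EuclideanSpace ℝ κ) (p : κ) :
    (∑ t ∈ s, v t) p = ∑ t ∈ s, v t p := by
  induction s using Finset.cons_induction with
  | empty => rfl
  | cons a s ha ih => rw [Finset.sum_cons, Finset.sum_cons, ← ih]; rfl

def outerVec {m K : ℕ} (a : EuclideanSpace ℝ (Fin m)) (b : EuclideanSpace ℝ (Fin K)) :
    EuclideanSpace ℝ (Fin m × Fin K) := WithLp.toLp 2 (fun p => a p.1 * b p.2)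

@[simp] lemma outerVec_apply {m K : ℕ} (a : EuclideanSpace ℝ (Fin m))
    (b : EuclideanSpace ℝ (Fin K)) (p : Fin m × Fin K) :
    outerVec a b p = a p.1 * b p.2 := rfl

lemma outer_norm {m K : ℕ} (a : EuclideanSpace ℝ (Fin m)) (b : EuclideanSpace ℝ (Fin K)) :
    ‖outerVec a b‖ = ‖a‖ * ‖b‖ := by
  have h : (∑ p : Fin m × Fin K, ‖outerVec a b p‖ ^ 2)
      = (∑ j, ‖a j‖ ^ 2) * (∑ l, ‖b l‖ ^ 2) := by
    rw [Fintype.sum_prod_type, Finset.sum_mul_sum]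
    simp [norm_mul, mul_pow]
  rw [EuclideanSpace.norm_eq, EuclideanSpace.norm_eq a, EuclideanSpace.norm_eq b, h,
    Real.sqrt_mul (by positivity)]

lemma int_le_sqrt {Ω : Type*} [MeasurableSpace Ω] {μ : Measure Ω} [IsProbabilityMeasure μ]
    {X : Ω → ℝ} (hX : MemLp X 2 μ) (h0 : 0 ≤ ∫ ω, X ω ∂μ) :
    ∫ ω, X ω ∂μ ≤ Real.sqrt (∫ ω, (X ω) ^ 2 ∂μ) := by
  have h := variance_nonneg X μ
  rw [variance_eq_sub hX] at h
  have h2 : (∫ ω, X ω ∂μ) ^ 2 ≤ ∫ ω, (X ω) ^ 2 ∂μ := by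
    have := sub_nonneg.mp h
    simpa [Pi.pow_apply] using this
  calc ∫ ω, X ω ∂μ = Real.sqrt ((∫ ω, X ω ∂μ) ^ 2) := (Real.sqrt_sq h0).symm
    _ ≤ _ := Real.sqrt_le_sqrt h2
/-- Lemma A.1: Markov-type bound for the normalized factor/average cross-product. -/
theorem stmt_0 {Ω : Type*} [MeasurableSpace Ω] (μ : Measure Ω) [IsProbabilityMeasure μ]
    (m K N T : ℕ) (hm : 0 < m) (hK : 0 < K) (hN : 0 < N) (hT : 0 < T)
    (τ : ℝ) (hτ0 : 0 ≤ τ) (hτ1 : τ < 1)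
    (f : Fin T → Ω → EuclideanSpace ℝ (Fin m))
    (e : Fin N → Fin T → Ω → EuclideanSpace ℝ (Fin K))
    (ebar : Fin T → Ω → EuclideanSpace ℝ (Fin K))
    (hebar : ∀ t ω, ebar t ω = (N : ℝ)⁻¹ • ∑ i, e i t ω)
    (hf2 : ∀ t, MemLp (f t) 2 μ)
    (he2 : ∀ i t, MemLp (e i t) 2 μ)
    (hindep : ∀ t, IndepFun (f t) (ebar t) μ)
    (Cf Ce : ℝ) (hCf : 0 ≤ Cf) (hCe : 0 ≤ Ce)
    (hMf : (1 / (T : ℝ) ^ (1 + τ)) * ∑ t, ∫ ω, ‖f t ω‖ ^ 2 ∂μ ≤ Cf)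
    (hMe : (1 / (T : ℝ)) * ∑ t, ∫ ω, ‖Real.sqrt (N : ℝ) • ebar t ω‖ ^ 2 ∂μ ≤ Ce)
    (ε : ℝ) (hε : 0 < ε) :
    (μ {ω | Real.sqrt (∑ j, ∑ l,
        ((1 / (T : ℝ) ^ (1 + τ)) * ∑ t, f t ω j * ebar t ω l) ^ 2) > ε}).toReal
      ≤ Real.sqrt (Cf * Ce) / (ε * Real.sqrt (N : ℝ) * (T : ℝ) ^ (τ / 2)) := by
  classical
  have hT0 : (0:ℝ) < T := by exact_mod_cast hT
  have hN0 : (0:ℝ) < N := by exact_mod_cast hN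
  have hTpow : (0:ℝ) < (T:ℝ) ^ (1+τ) := Real.rpow_pos_of_pos hT0 _
  set c : ℝ := 1 / (T:ℝ) ^ (1+τ) with hc_def
  have hc : 0 < c := by positivity
  -- ebar is L²
  have hebar2 : ∀ t, MemLp (ebar t) 2 μ := by
    intro t
    have h1 : MemLp (∑ i, e i t) 2 μ :=
      memLp_finset_sum' _ (fun i _ => he2 i t)
    have h1' : MemLp (fun ω => ∑ i, e i t ω) 2 μ := by
      rwa [Finset.sum_fn] at h1
    have h2 : ebar t = fun ω => (N:ℝ)⁻¹ • ∑ i, e i t ω := funext fun ω => hebar t ω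
    rw [h2]
    exact h1'.const_smul ((N:ℝ)⁻¹)
  have hfn : ∀ t, Integrable (fun ω => ‖f t ω‖) μ :=
    fun t => ((hf2 t).norm).integrable one_le_two
  have hen : ∀ t, Integrable (fun ω => ‖ebar t ω‖) μ :=
    fun t => ((hebar2 t).norm).integrable one_le_two
  have hindn : ∀ t, IndepFun (fun ω => ‖f t ω‖) (fun ω => ‖ebar t ω‖) μ :=
    fun t => (hindep t).comp measurable_norm measurable_norm
  have hprod : ∀ t, Integrable (fun ω => ‖f t ω‖ * ‖ebar t ω‖) μ :=
    fun t => (hindn t).integrable_mul (hfn t) (hen t)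
  set g : Ω → ℝ := fun ω => c * ∑ t, ‖f t ω‖ * ‖ebar t ω‖ with hg_def
  have hgint : Integrable g μ :=
    (integrable_finset_sum _ (fun t _ => hprod t)).const_mul c
  have hg0 : ∀ ω, 0 ≤ g ω := by
    intro ω
    have : 0 ≤ ∑ t, ‖f t ω‖ * ‖ebar t ω‖ :=
      Finset.sum_nonneg fun t _ => mul_nonneg (norm_nonneg _) (norm_nonneg _)
    exact mul_nonneg hc.le this
  -- pointwise bound
  have hptw : ∀ ω, Real.sqrt (∑ j, ∑ l, (c * ∑ t, f t ω j * ebar t ω l) ^ 2) ≤ g ω := by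
    intro ω
    have h1 : Real.sqrt (∑ j, ∑ l, (c * ∑ t, f t ω j * ebar t ω l) ^ 2)
        = ‖c • ∑ t, outerVec (f t ω) (ebar t ω)‖ := by
      rw [EuclideanSpace.norm_eq, Fintype.sum_prod_type]
      congr 1
      refine Finset.sum_congr rfl fun j _ => Finset.sum_congr rfl fun l _ => ?_
      have h2 : (c • ∑ t, outerVec (f t ω) (ebar t ω)) (j, l)
          = c * ∑ t, f t ω j * ebar t ω l := by
        rw [PiLp.smul_apply, eucl_sum_apply]
        simp [smul_eq_mul]
      rw [h2, Real.norm_eq_abs, sq_abs]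
    rw [h1, norm_smul, Real.norm_eq_abs, abs_of_pos hc]
    calc c * ‖∑ t, outerVec (f t ω) (ebar t ω)‖
        ≤ c * ∑ t, ‖outerVec (f t ω) (ebar t ω)‖ :=
          mul_le_mul_of_nonneg_left (norm_sum_le _ _) hc.le
      _ = g ω := by
          simp only [hg_def]
          congr 1
          exact Finset.sum_congr rfl fun t _ => outer_norm _ _
  -- Markov
  have hsub : {ω | Real.sqrt (∑ j, ∑ l, (c * ∑ t, f t ω j * ebar t ω l) ^ 2) > ε}
      ⊆ {ω | ε ≤ g ω} := fun ω hω => le_trans (le_of_lt hω) (hptw ω)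
  have hmarkov := mul_meas_ge_le_integral_of_nonneg
    (Filter.Eventually.of_forall hg0) hgint ε
  -- integral computation
  have hsum : ∫ ω, g ω ∂μ = c * ∑ t, (∫ ω, ‖f t ω‖ ∂μ) * (∫ ω, ‖ebar t ω‖ ∂μ) := by
    simp only [hg_def]
    rw [integral_const_mul, integral_finset_sum _ (fun t _ => hprod t)]
    congr 1
    exact Finset.sum_congr rfl fun t _ =>
      (hindn t).integral_fun_mul_eq_mul_integral (hfn t).1 (hen t).1
  have hterm : ∀ t : Fin T, (∫ ω, ‖f t ω‖ ∂μ) * (∫ ω, ‖ebar t ω‖ ∂μ)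
      ≤ Real.sqrt (∫ ω, ‖f t ω‖ ^ 2 ∂μ) * Real.sqrt (∫ ω, ‖ebar t ω‖ ^ 2 ∂μ) := by
    intro t
    exact mul_le_mul
      (int_le_sqrt (hf2 t).norm (integral_nonneg fun ω => norm_nonneg _))
      (int_le_sqrt (hebar2 t).norm (integral_nonneg fun ω => norm_nonneg _))
      (integral_nonneg fun ω => norm_nonneg _) (Real.sqrt_nonneg _)
  have hf2nn : ∀ t : Fin T, 0 ≤ ∫ ω, ‖f t ω‖ ^ 2 ∂μ :=
    fun t => integral_nonneg fun ω => by positivity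
  have he2nn : ∀ t : Fin T, 0 ≤ ∫ ω, ‖ebar t ω‖ ^ 2 ∂μ :=
    fun t => integral_nonneg fun ω => by positivity
  have hCS : ∑ t, Real.sqrt (∫ ω, ‖f t ω‖ ^ 2 ∂μ) * Real.sqrt (∫ ω, ‖ebar t ω‖ ^ 2 ∂μ)
      ≤ Real.sqrt (∑ t, ∫ ω, ‖f t ω‖ ^ 2 ∂μ) * Real.sqrt (∑ t, ∫ ω, ‖ebar t ω‖ ^ 2 ∂μ) := by
    have h := Finset.sum_mul_sq_le_sq_mul_sq Finset.univ
      (fun t => Real.sqrt (∫ ω, ‖f t ω‖ ^ 2 ∂μ))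
      (fun t => Real.sqrt (∫ ω, ‖ebar t ω‖ ^ 2 ∂μ))
    have hnn : 0 ≤ ∑ t, Real.sqrt (∫ ω, ‖f t ω‖ ^ 2 ∂μ) * Real.sqrt (∫ ω, ‖ebar t ω‖ ^ 2 ∂μ) :=
      Finset.sum_nonneg fun t _ => mul_nonneg (Real.sqrt_nonneg _) (Real.sqrt_nonneg _)
    calc ∑ t, Real.sqrt (∫ ω, ‖f t ω‖ ^ 2 ∂μ) * Real.sqrt (∫ ω, ‖ebar t ω‖ ^ 2 ∂μ)
        = Real.sqrt ((∑ t, Real.sqrt (∫ ω, ‖f t ω‖ ^ 2 ∂μ)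
            * Real.sqrt (∫ ω, ‖ebar t ω‖ ^ 2 ∂μ)) ^ 2) := (Real.sqrt_sq hnn).symm
      _ ≤ Real.sqrt ((∑ t, Real.sqrt (∫ ω, ‖f t ω‖ ^ 2 ∂μ) ^ 2)
            * ∑ t, Real.sqrt (∫ ω, ‖ebar t ω‖ ^ 2 ∂μ) ^ 2) := Real.sqrt_le_sqrt h
      _ = Real.sqrt (∑ t, ∫ ω, ‖f t ω‖ ^ 2 ∂μ) * Real.sqrt (∑ t, ∫ ω, ‖ebar t ω‖ ^ 2 ∂μ) := by
          rw [Real.sqrt_mul (Finset.sum_nonneg fun t _ => sq_nonneg _)]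
          congr 2
          · exact Finset.sum_congr rfl fun t _ => Real.sq_sqrt (hf2nn t)
          · exact Finset.sum_congr rfl fun t _ => Real.sq_sqrt (he2nn t)
  -- moment bounds
  have hFf : ∑ t, ∫ ω, ‖f t ω‖ ^ 2 ∂μ ≤ Cf * (T:ℝ) ^ (1+τ) := by
    have h := mul_le_mul_of_nonneg_left hMf hTpow.le
    calc ∑ t, ∫ ω, ‖f t ω‖ ^ 2 ∂μ
        = (T:ℝ) ^ (1+τ) * ((1 / (T:ℝ) ^ (1+τ)) * ∑ t, ∫ ω, ‖f t ω‖ ^ 2 ∂μ) := by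
          field_simp
      _ ≤ (T:ℝ) ^ (1+τ) * Cf := h
      _ = Cf * (T:ℝ) ^ (1+τ) := mul_comm _ _
  have hFe : ∑ t, ∫ ω, ‖ebar t ω‖ ^ 2 ∂μ ≤ Ce * (T:ℝ) / (N:ℝ) := by
    have hnorm : ∀ (t : Fin T) (ω : Ω), ‖Real.sqrt (N:ℝ) • ebar t ω‖ ^ 2
        = (N:ℝ) * ‖ebar t ω‖ ^ 2 := by
      intro t ω
      rw [norm_smul, Real.norm_eq_abs, abs_of_nonneg (Real.sqrt_nonneg _), mul_pow,
        Real.sq_sqrt hN0.le]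
    have h1 : ∀ t : Fin T, ∫ ω, ‖Real.sqrt (N:ℝ) • ebar t ω‖ ^ 2 ∂μ
        = (N:ℝ) * ∫ ω, ‖ebar t ω‖ ^ 2 ∂μ := by
      intro t
      simp_rw [hnorm t]
      exact integral_const_mul _ _
    simp_rw [h1] at hMe
    rw [← Finset.mul_sum] at hMe
    have h2 := mul_le_mul_of_nonneg_left hMe hT0.le
    have h3 : (N:ℝ) * ∑ t, ∫ ω, ‖ebar t ω‖ ^ 2 ∂μ ≤ Ce * (T:ℝ) := by
      calc (N:ℝ) * ∑ t, ∫ ω, ‖ebar t ω‖ ^ 2 ∂μ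
          = (T:ℝ) * ((1/(T:ℝ)) * ((N:ℝ) * ∑ t, ∫ ω, ‖ebar t ω‖ ^ 2 ∂μ)) := by
            field_simp
        _ ≤ (T:ℝ) * Ce := h2
        _ = Ce * (T:ℝ) := mul_comm _ _
    calc ∑ t, ∫ ω, ‖ebar t ω‖ ^ 2 ∂μ
        = ((N:ℝ) * ∑ t, ∫ ω, ‖ebar t ω‖ ^ 2 ∂μ) / (N:ℝ) := by field_simp
      _ ≤ Ce * (T:ℝ) / (N:ℝ) := by gcongr
  have hig : ∫ ω, g ω ∂μ
      ≤ c * (Real.sqrt (Cf * (T:ℝ) ^ (1+τ)) * Real.sqrt (Ce * (T:ℝ) / (N:ℝ))) := by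
    rw [hsum]
    refine mul_le_mul_of_nonneg_left ?_ hc.le
    calc ∑ t, (∫ ω, ‖f t ω‖ ∂μ) * (∫ ω, ‖ebar t ω‖ ∂μ)
        ≤ ∑ t, Real.sqrt (∫ ω, ‖f t ω‖ ^ 2 ∂μ) * Real.sqrt (∫ ω, ‖ebar t ω‖ ^ 2 ∂μ) :=
          Finset.sum_le_sum fun t _ => hterm t
      _ ≤ Real.sqrt (∑ t, ∫ ω, ‖f t ω‖ ^ 2 ∂μ) * Real.sqrt (∑ t, ∫ ω, ‖ebar t ω‖ ^ 2 ∂μ) := hCS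
      _ ≤ Real.sqrt (Cf * (T:ℝ) ^ (1+τ)) * Real.sqrt (Ce * (T:ℝ) / (N:ℝ)) := by
          exact mul_le_mul (Real.sqrt_le_sqrt hFf) (Real.sqrt_le_sqrt hFe)
            (Real.sqrt_nonneg _) (Real.sqrt_nonneg _)
  -- key algebraic identity
  have hkey : c * (Real.sqrt (Cf * (T:ℝ) ^ (1+τ)) * Real.sqrt (Ce * (T:ℝ) / (N:ℝ)))
      = Real.sqrt (Cf * Ce) / (Real.sqrt (N:ℝ) * (T:ℝ) ^ (τ/2)) := by
    rw [Real.sqrt_mul hCf, Real.sqrt_div (by positivity : (0:ℝ) ≤ Ce * (T:ℝ)),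
      Real.sqrt_mul hCe, Real.sqrt_mul hCf Ce]
    rw [show Real.sqrt ((T:ℝ) ^ (1+τ)) = (T:ℝ) ^ ((1+τ) / 2) by
      rw [Real.sqrt_eq_rpow, ← Real.rpow_mul hT0.le]
      congr 1
      ring]
    rw [show Real.sqrt (T:ℝ) = (T:ℝ) ^ ((1:ℝ)/2) from Real.sqrt_eq_rpow _]
    have hrn : Real.sqrt (N:ℝ) ≠ 0 := by positivity
    have h5 : (T:ℝ) ^ ((1+τ) / 2) * (T:ℝ) ^ ((1:ℝ)/2) * (T:ℝ) ^ (τ/2)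
        = (T:ℝ) ^ (1+τ) := by
      rw [← Real.rpow_add hT0, ← Real.rpow_add hT0]
      congr 1
      ring
    rw [hc_def]
    field_simp
    linear_combination Real.sqrt Cf * Real.sqrt Ce * h5
  -- conclude
  calc (μ {ω | Real.sqrt (∑ j, ∑ l, (c * ∑ t, f t ω j * ebar t ω l) ^ 2) > ε}).toReal
      ≤ (μ {ω | ε ≤ g ω}).toReal :=
        ENNReal.toReal_mono (measure_ne_top _ _) (measure_mono hsub)
    _ ≤ (∫ ω, g ω ∂μ) / ε := by
        rw [le_div_iff₀ hε]
        rw [mul_comm]; exact hmarkov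
    _ ≤ (c * (Real.sqrt (Cf * (T:ℝ) ^ (1+τ)) * Real.sqrt (Ce * (T:ℝ) / (N:ℝ)))) / ε := by
        gcongr
    _ = Real.sqrt (Cf * Ce) / (ε * Real.sqrt (N:ℝ) * (T:ℝ) ^ (τ/2)) := by
        rw [hkey, div_div]
        ring_nf
end

section
/- Let (Ω, ℙ) be a probability space, let m, K, N, T be positive integers and τ ∈ [0, 1). Let f_t : Ω → ℝ^m (t = 1, …, T) and e_{i,t} : Ω → ℝ^K (i = 1, …, N, t = 1, …, T) be square-integrable random vectors, and set ē_t = N^{-1} Σ_{i=1}^N e_{i,t}. Assume that the family (f_1, …, f_T) is independent of the family (e_{i,t})_{i,t}, that the averages are uncorrelated over time, i.e. E⟨ē_t, ē_s⟩ = 0 for all t ≠ s, and that (1/T^{1+τ}) Σ_{t=1}^T E‖f_t‖² ≤ C_f and sup_{1≤t≤T} E(N‖ē_t‖²) ≤ C_e for constants C_f, C_e ≥ 0. Then E ‖ (1/T^{1+τ}) Σ_{t=1}^T f_t ē_t′ ‖_F² ≤ C_e · C_f / (N · T^{1+τ}), and consequently for every ε > 0, ℙ( ‖ (1/T^{1+τ})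 Σ_{t=1}^T f_t ē_t′ ‖_F > ε ) ≤ C_e · C_f / (ε² · N · T^{1+τ}). In particular the rate improves to N^{-1/2} T^{-(1+τ)/2}. -/
open MeasureTheory ProbabilityTheory

lemma sum_sq_outer {m K T : ℕ} (u : Fin T → Fin m → ℝ) (v : Fin T → Fin K → ℝ) :
    ∑ j, ∑ l, (∑ t, u t j * v t l)^2
      = ∑ t, ∑ s, (∑ j, u t j * u s j) * (∑ l, v t l * v s l) := by
  have expand : ∀ j l, (∑ t, u t j * v t l)^2
      = ∑ t, ∑ s, (u t j * v t l) * (u s j * v s l) := by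
    intro j l; rw [sq, Finset.sum_mul_sum]
  simp only [expand, Finset.sum_mul_sum]
  calc ∑ j, ∑ l, ∑ t, ∑ s, (u t j * v t l) * (u s j * v s l)
      = ∑ j, ∑ t, ∑ l, ∑ s, (u t j * v t l) * (u s j * v s l) :=
        Finset.sum_congr rfl (fun j _ => Finset.sum_comm)
    _ = ∑ t, ∑ j, ∑ l, ∑ s, (u t j * v t l) * (u s j * v s l) := Finset.sum_comm
    _ = ∑ t, ∑ j, ∑ s, ∑ l, (u t j * v t l) * (u s j * v s l) :=
        Finset.sum_congr rfl (fun t _ => Finset.sum_congr rfl fun j _ => Finset.sum_comm)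
    _ = ∑ t, ∑ s, ∑ j, ∑ l, (u t j * v t l) * (u s j * v s l) :=
        Finset.sum_congr rfl (fun t _ => Finset.sum_comm)
    _ = ∑ t, ∑ s, ∑ j, ∑ l, (u t j * u s j) * (v t l * v s l) :=
        Finset.sum_congr rfl fun t _ => Finset.sum_congr rfl fun s _ =>
          Finset.sum_congr rfl fun j _ => Finset.sum_congr rfl fun l _ => by ring

/-- Inner product of two `MemLp 2` functions is integrable. -/
lemma memL2_integrable_inner {Ω : Type*} [MeasurableSpace Ω] {μ : Measure Ω}
    {E : Type*} [NormedAddCommGroup E] [InnerProductSpace ℝ E]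
    {f g : Ω → E} (hf : MemLp f 2 μ) (hg : MemLp g 2 μ) :
    Integrable (fun ω => (inner ℝ (f ω) (g ω) : ℝ)) μ := by
  have h := L2.integrable_inner (𝕜 := ℝ) (hf.toLp f) (hg.toLp g)
  refine h.congr ?_
  filter_upwards [hf.coeFn_toLp, hg.coeFn_toLp] with ω h1 h2
  rw [h1, h2]

/-- Corollary A.1: sharper rate under serially uncorrelated cross-section averages. -/
theorem stmt_1 {Ω : Type*} [MeasurableSpace Ω] (μ : Measure Ω) [IsProbabilityMeasure μ]
    (m K N T : ℕ) (hm : 0 < m) (hK : 0 < K) (hN : 0 < N) (hT : 0 < T)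
    (τ : ℝ) (hτ0 : 0 ≤ τ) (hτ1 : τ < 1)
    (f : Fin T → Ω → EuclideanSpace ℝ (Fin m))
    (e : Fin N → Fin T → Ω → EuclideanSpace ℝ (Fin K))
    (ebar : Fin T → Ω → EuclideanSpace ℝ (Fin K))
    (hebar : ∀ t ω, ebar t ω = (N : ℝ)⁻¹ • ∑ i, e i t ω)
    (hf2 : ∀ t, MemLp (f t) 2 μ)
    (he2 : ∀ i t, MemLp (e i t) 2 μ)
    (hindep : IndepFun (fun ω t => f t ω) (fun ω (i : Fin N) (t : Fin T) => e i t ω) μ)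
    (huncorr : ∀ t s : Fin T, t ≠ s →
      ∫ ω, (inner ℝ (ebar t ω) (ebar s ω) : ℝ) ∂μ = 0)
    (Cf Ce : ℝ) (hCf : 0 ≤ Cf) (hCe : 0 ≤ Ce)
    (hMf : (1 / (T : ℝ) ^ (1 + τ)) * ∑ t, ∫ ω, ‖f t ω‖ ^ 2 ∂μ ≤ Cf)
    (hMe : ∀ t, ∫ ω, (N : ℝ) * ‖ebar t ω‖ ^ 2 ∂μ ≤ Ce) :
    (∫ ω, ∑ j, ∑ l,
        ((1 / (T : ℝ) ^ (1 + τ)) * ∑ t, f t ω j * ebar t ω l) ^ 2 ∂μ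
      ≤ Ce * Cf / ((N : ℝ) * (T : ℝ) ^ (1 + τ))) ∧
    ∀ ε : ℝ, 0 < ε →
      (μ {ω | Real.sqrt (∑ j, ∑ l,
          ((1 / (T : ℝ) ^ (1 + τ)) * ∑ t, f t ω j * ebar t ω l) ^ 2) > ε}).toReal
        ≤ Ce * Cf / (ε ^ 2 * (N : ℝ) * (T : ℝ) ^ (1 + τ)) := by
  have hTpos : (0 : ℝ) < (T : ℝ) ^ (1 + τ) := by positivity
  have hNpos : (0 : ℝ) < (N : ℝ) := by exact_mod_cast hN
  set a : ℝ := 1 / (T : ℝ) ^ (1 + τ) with ha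
  have ha0 : 0 ≤ a := by positivity
  -- the random Frobenius norm squared
  set S : Ω → ℝ := fun ω => ∑ j, ∑ l, (a * ∑ t, f t ω j * ebar t ω l) ^ 2 with hS
  have hSnn : ∀ ω, 0 ≤ S ω := fun ω =>
    Finset.sum_nonneg fun j _ => Finset.sum_nonneg fun l _ => sq_nonneg _
  -- ebar is in L²
  have hebar2 : ∀ t, MemLp (ebar t) 2 μ := by
    intro t
    have h : MemLp (fun ω => (N : ℝ)⁻¹ • ∑ i, e i t ω) 2 μ := by
      have hsum : MemLp (fun ω => ∑ i, e i t ω) 2 μ :=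
        memLp_finset_sum Finset.univ (fun i _ => he2 i t)
      exact hsum.const_smul ((N : ℝ)⁻¹)
    have he : ebar t = fun ω => (N : ℝ)⁻¹ • ∑ i, e i t ω := funext fun ω => hebar t ω
    rw [he]; exact h
  -- integrability of the inner products
  have hXint : ∀ t s : Fin T,
      Integrable (fun ω => (inner ℝ (f t ω) (f s ω) : ℝ)) μ := fun t s =>
    memL2_integrable_inner (hf2 t) (hf2 s)
  have hYint : ∀ t s : Fin T,
      Integrable (fun ω => (inner ℝ (ebar t ω) (ebar s ω) : ℝ)) μ := fun t s =>
    memL2_integrable_inner (hebar2 t) (hebar2 s)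
  -- independence of the relevant inner products
  have hXY : ∀ t s : Fin T,
      IndepFun (fun ω => (inner ℝ (f t ω) (f s ω) : ℝ))
        (fun ω => (inner ℝ (ebar t ω) (ebar s ω) : ℝ)) μ := by
    intro t s
    have hφ : Measurable fun g : Fin T → EuclideanSpace ℝ (Fin m) =>
        (inner ℝ (g t) (g s) : ℝ) :=
      (measurable_pi_apply t).inner (measurable_pi_apply s)
    have hψ : Measurable fun h : Fin N → Fin T → EuclideanSpace ℝ (Fin K) =>
        (inner ℝ ((N : ℝ)⁻¹ • ∑ i, h i t) ((N : ℝ)⁻¹ • ∑ i, h i s) : ℝ) := by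
      have h1 : Measurable fun h : Fin N → Fin T → EuclideanSpace ℝ (Fin K) =>
          (N : ℝ)⁻¹ • ∑ i, h i t := by
        fun_prop
      have h2 : Measurable fun h : Fin N → Fin T → EuclideanSpace ℝ (Fin K) =>
          (N : ℝ)⁻¹ • ∑ i, h i s := by
        fun_prop
      exact h1.inner h2
    have h := hindep.comp hφ hψ
    have heq : (fun ω => (inner ℝ (ebar t ω) (ebar s ω) : ℝ))
        = (fun h : Fin N → Fin T → EuclideanSpace ℝ (Fin K) =>
            (inner ℝ ((N : ℝ)⁻¹ • ∑ i, h i t) ((N : ℝ)⁻¹ • ∑ i, h i s) : ℝ))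
          ∘ (fun ω (i : Fin N) (t : Fin T) => e i t ω) := by
      funext ω; simp only [Function.comp_apply, hebar]
    rw [heq]; exact h
  -- integrability and factorization of products
  have hmul_int : ∀ t s : Fin T, Integrable
      (fun ω => (inner ℝ (f t ω) (f s ω) : ℝ) * (inner ℝ (ebar t ω) (ebar s ω) : ℝ)) μ :=
    fun t s => (hXY t s).integrable_mul (hXint t s) (hYint t s)
  have hmul_eq : ∀ t s : Fin T,
      ∫ ω, (inner ℝ (f t ω) (f s ω) : ℝ) * (inner ℝ (ebar t ω) (ebar s ω) : ℝ) ∂μ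
        = (∫ ω, (inner ℝ (f t ω) (f s ω) : ℝ) ∂μ)
          * ∫ ω, (inner ℝ (ebar t ω) (ebar s ω) : ℝ) ∂μ :=
    fun t s => (hXY t s).integral_fun_mul_eq_mul_integral (hXint t s).aestronglyMeasurable (hYint t s).aestronglyMeasurable
  -- pointwise expansion of S
  have key : ∀ ω, S ω = a ^ 2 * ∑ t, ∑ s,
      (inner ℝ (f t ω) (f s ω) : ℝ) * (inner ℝ (ebar t ω) (ebar s ω) : ℝ) := by
    intro ω
    have : S ω = a ^ 2 * ∑ j, ∑ l, (∑ t, f t ω j * ebar t ω l) ^ 2 := by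
      simp only [hS, mul_pow, ← Finset.mul_sum]
    rw [this, sum_sq_outer (fun t => f t ω) (fun t => ebar t ω)]
    simp only [PiLp.inner_apply, RCLike.inner_apply, conj_trivial]
    exact congrArg _ Finset.sum_comm
  have hSint : Integrable S μ := by
    have : Integrable (fun ω => a ^ 2 * ∑ t, ∑ s,
        (inner ℝ (f t ω) (f s ω) : ℝ) * (inner ℝ (ebar t ω) (ebar s ω) : ℝ)) μ :=
      ((integrable_finset_sum _ fun t _ =>
        integrable_finset_sum _ fun s _ => hmul_int t s).const_mul _)
    exact this.congr (Filter.Eventually.of_forall fun ω => (key ω).symm)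
  -- compute the expectation
  have hIS : ∫ ω, S ω ∂μ = a ^ 2 * ∑ t, ∑ s,
      (∫ ω, (inner ℝ (f t ω) (f s ω) : ℝ) ∂μ)
        * ∫ ω, (inner ℝ (ebar t ω) (ebar s ω) : ℝ) ∂μ := by
    rw [integral_congr_ae (Filter.Eventually.of_forall key), integral_const_mul,
      integral_finset_sum _ (fun t _ => integrable_finset_sum _ fun s _ => hmul_int t s)]
    congr 1
    refine Finset.sum_congr rfl fun t _ => ?_
    rw [integral_finset_sum _ (fun s _ => hmul_int t s)]
    exact Finset.sum_congr rfl fun s _ => hmul_eq t s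
  -- kill off-diagonal terms and bound diagonal
  have hdiag : ∀ t : Fin T, ∑ s,
      (∫ ω, (inner ℝ (f t ω) (f s ω) : ℝ) ∂μ)
        * ∫ ω, (inner ℝ (ebar t ω) (ebar s ω) : ℝ) ∂μ
      = (∫ ω, ‖f t ω‖ ^ 2 ∂μ) * ∫ ω, ‖ebar t ω‖ ^ 2 ∂μ := by
    intro t
    rw [Finset.sum_eq_single t]
    · congr 1
      · exact integral_congr_ae (Filter.Eventually.of_forall fun ω =>
          real_inner_self_eq_norm_sq _)
      · exact integral_congr_ae (Filter.Eventually.of_forall fun ω =>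
          real_inner_self_eq_norm_sq _)
    · intro s _ hst
      rw [huncorr t s (Ne.symm hst), mul_zero]
    · intro h; exact absurd (Finset.mem_univ t) h
  have hfnn : ∀ t : Fin T, 0 ≤ ∫ ω, ‖f t ω‖ ^ 2 ∂μ := fun t =>
    integral_nonneg fun ω => by positivity
  have hebound : ∀ t : Fin T, ∫ ω, ‖ebar t ω‖ ^ 2 ∂μ ≤ Ce / N := by
    intro t
    have h := hMe t
    rw [integral_const_mul] at h
    exact (le_div_iff₀' hNpos).mpr h
  -- main bound on ∫ S
  have hmain : ∫ ω, S ω ∂μ ≤ Ce * Cf / ((N : ℝ) * (T : ℝ) ^ (1 + τ)) := by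
    rw [hIS]
    have step1 : ∑ t, ∑ s,
        (∫ ω, (inner ℝ (f t ω) (f s ω) : ℝ) ∂μ)
          * ∫ ω, (inner ℝ (ebar t ω) (ebar s ω) : ℝ) ∂μ
        ≤ (Ce / N) * ∑ t, ∫ ω, ‖f t ω‖ ^ 2 ∂μ := by
      rw [Finset.mul_sum]
      refine Finset.sum_le_sum fun t _ => ?_
      rw [hdiag t, mul_comm (Ce / (N : ℝ))]
      exact mul_le_mul_of_nonneg_left (hebound t) (hfnn t)
    have h2 : a ^ 2 * ∑ t, ∑ s,
        (∫ ω, (inner ℝ (f t ω) (f s ω) : ℝ) ∂μ)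
          * ∫ ω, (inner ℝ (ebar t ω) (ebar s ω) : ℝ) ∂μ
        ≤ a ^ 2 * ((Ce / N) * ∑ t, ∫ ω, ‖f t ω‖ ^ 2 ∂μ) :=
      mul_le_mul_of_nonneg_left step1 (by positivity)
    refine h2.trans ?_
    have h3 : a ^ 2 * ((Ce / N) * ∑ t, ∫ ω, ‖f t ω‖ ^ 2 ∂μ)
        = (a * (Ce / N)) * (a * ∑ t, ∫ ω, ‖f t ω‖ ^ 2 ∂μ) := by ring
    rw [h3]
    have h4 : (a * (Ce / N)) * (a * ∑ t, ∫ ω, ‖f t ω‖ ^ 2 ∂μ)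
        ≤ (a * (Ce / N)) * Cf := by
      refine mul_le_mul_of_nonneg_left ?_ (by positivity)
      exact hMf
    refine h4.trans (le_of_eq ?_)
    rw [ha]
    field_simp
  refine ⟨hmain, ?_⟩
  intro ε hε
  have hsubset : {ω | Real.sqrt (S ω) > ε} ⊆ {ω | ε ^ 2 ≤ S ω} := by
    intro ω hω
    have h1 : ε < Real.sqrt (S ω) := hω
    have := (Real.lt_sqrt (hε.le)).mp h1
    exact this.le
  have hmeas_mono : μ {ω | Real.sqrt (S ω) > ε} ≤ μ {ω | ε ^ 2 ≤ S ω} :=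
    measure_mono hsubset
  have markov := mul_meas_ge_le_integral_of_nonneg
    (Filter.Eventually.of_forall hSnn) hSint (ε ^ 2)
  have hfin1 : μ {ω | Real.sqrt (S ω) > ε} ≠ ⊤ := measure_ne_top _ _
  have hfin2 : μ {ω | ε ^ 2 ≤ S ω} ≠ ⊤ := measure_ne_top _ _
  have htoReal : (μ {ω | Real.sqrt (S ω) > ε}).toReal ≤ (μ {ω | ε ^ 2 ≤ S ω}).toReal :=
    ENNReal.toReal_mono hfin2 hmeas_mono
  have hchain : ε ^ 2 * (μ {ω | Real.sqrt (S ω) > ε}).toReal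
      ≤ Ce * Cf / ((N : ℝ) * (T : ℝ) ^ (1 + τ)) := by
    calc ε ^ 2 * (μ {ω | Real.sqrt (S ω) > ε}).toReal
        ≤ ε ^ 2 * (μ {ω | ε ^ 2 ≤ S ω}).toReal :=
          mul_le_mul_of_nonneg_left htoReal (by positivity)
      _ ≤ ∫ ω, S ω ∂μ := markov
      _ ≤ Ce * Cf / ((N : ℝ) * (T : ℝ) ^ (1 + τ)) := hmain
  have hε2 : (0 : ℝ) < ε ^ 2 := by positivity
  rw [show Ce * Cf / (ε ^ 2 * (N : ℝ) * (T : ℝ) ^ (1 + τ))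
      = (Ce * Cf / ((N : ℝ) * (T : ℝ) ^ (1 + τ))) / ε ^ 2 by
    field_simp]
  rw [le_div_iff₀ hε2]
  linarith [hchain]
end

section
/- Let (Ω, ℙ) be a probability space, let m, K, T be positive integers and τ ∈ [0, 1). Let f_t : Ω → ℝ^m and e_t : Ω → ℝ^K (t = 1, …, T) be square-integrable random vectors such that for each t the vector f_t is independent of e_t, and (1/T^{1+τ}) Σ_{t=1}^T E‖f_t‖² ≤ C_f and (1/T) Σ_{t=1}^T E‖e_t‖² ≤ C_e for constants C_f, C_e ≥ 0. Then for every ε > 0, ℙ( ‖ (1/T^{1+τ}) Σ_{t=1}^T f_t e_t′ ‖_F > ε ) ≤ √(C_f · C_e) / (ε · T^{τ/2}). In particular, ‖T^{-(1+τ)} Σ_t f_t e_t′‖_F is bounded in probability at rate T^{-τ/2}. -/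
open MeasureTheory ProbabilityTheory

lemma aux_tri {m K T : ℕ} (F : Fin T → EuclideanSpace ℝ (Fin m)) (E : Fin T → EuclideanSpace ℝ (Fin K)) :
    Real.sqrt (∑ j, ∑ l, (∑ t, F t j * E t l) ^ 2) ≤ ∑ t, ‖F t‖ * ‖E t‖ := by
  set g : Fin T → EuclideanSpace ℝ (Fin m × Fin K) :=
    fun t => (WithLp.equiv 2 ((Fin m × Fin K) → ℝ)).symm (fun p => F t p.1 * E t p.2) with hg
  have happ : ∀ t p, g t p = F t p.1 * E t p.2 := fun t p => rfl
  have hsum : ∀ p : Fin m × Fin K, (∑ t, g t) p = ∑ t, F t p.1 * E t p.2 := by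
    intro p
    have : (∑ t, g t) p = ∑ t, g t p := by
      induction (Finset.univ : Finset (Fin T)) using Finset.cons_induction with
      | empty => simp [PiLp.zero_apply]
      | cons a s ha ih => rw [Finset.sum_cons, Finset.sum_cons, PiLp.add_apply, ih]
    simp [this, happ]
  have h1 : Real.sqrt (∑ j, ∑ l, (∑ t, F t j * E t l) ^ 2) = ‖∑ t, g t‖ := by
    rw [EuclideanSpace.norm_eq, Fintype.sum_prod_type]
    congr 1
    refine Finset.sum_congr rfl fun j _ => Finset.sum_congr rfl fun l _ => ?_
    rw [hsum (j, l), Real.norm_eq_abs, sq_abs]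
  rw [h1]
  refine le_trans (norm_sum_le _ _) (Finset.sum_le_sum fun t _ => ?_)
  rw [EuclideanSpace.norm_eq, EuclideanSpace.norm_eq, EuclideanSpace.norm_eq]
  rw [← Real.sqrt_mul (by positivity)]
  apply Real.sqrt_le_sqrt
  rw [Fintype.sum_prod_type, Finset.sum_mul_sum]
  apply le_of_eq
  refine Finset.sum_congr rfl fun j _ => Finset.sum_congr rfl fun l _ => ?_
  rw [happ]
  simp [Real.norm_eq_abs, sq_abs, mul_pow]

lemma aux_cs {Ω : Type*} [MeasurableSpace Ω] (μ : Measure Ω) [IsProbabilityMeasure μ]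
    (g : Ω → ℝ) (hg : MemLp g 2 μ) :
    ∫ ω, g ω ∂μ ≤ Real.sqrt (∫ ω, (g ω) ^ 2 ∂μ) := by
  have h := variance_nonneg g μ
  rw [variance_eq_sub hg] at h
  have heq : ∫ x, (g ^ 2) x ∂μ = ∫ ω, (g ω) ^ 2 ∂μ := by simp [Pi.pow_apply]
  have h2 : (∫ ω, g ω ∂μ) ^ 2 ≤ ∫ ω, (g ω) ^ 2 ∂μ := by rw [← heq]; linarith
  calc ∫ ω, g ω ∂μ ≤ |∫ ω, g ω ∂μ| := le_abs_self _
    _ = Real.sqrt ((∫ ω, g ω ∂μ) ^ 2) := (Real.sqrt_sq_eq_abs _).symm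
    _ ≤ _ := Real.sqrt_le_sqrt h2


/-- Lemma A.2: individual-unit analogue of Lemma A.1. -/
theorem stmt_2 {Ω : Type*} [MeasurableSpace Ω] (μ : Measure Ω) [IsProbabilityMeasure μ]
    (m K T : ℕ) (hm : 0 < m) (hK : 0 < K) (hT : 0 < T)
    (τ : ℝ) (hτ0 : 0 ≤ τ) (hτ1 : τ < 1)
    (f : Fin T → Ω → EuclideanSpace ℝ (Fin m))
    (e : Fin T → Ω → EuclideanSpace ℝ (Fin K))
    (hf2 : ∀ t, MemLp (f t) 2 μ)
    (he2 : ∀ t, MemLp (e t) 2 μ)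
    (hindep : ∀ t, IndepFun (f t) (e t) μ)
    (Cf Ce : ℝ) (hCf : 0 ≤ Cf) (hCe : 0 ≤ Ce)
    (hMf : (1 / (T : ℝ) ^ (1 + τ)) * ∑ t, ∫ ω, ‖f t ω‖ ^ 2 ∂μ ≤ Cf)
    (hMe : (1 / (T : ℝ)) * ∑ t, ∫ ω, ‖e t ω‖ ^ 2 ∂μ ≤ Ce)
    (ε : ℝ) (hε : 0 < ε) :
    (μ {ω | Real.sqrt (∑ j, ∑ l,
        ((1 / (T : ℝ) ^ (1 + τ)) * ∑ t, f t ω j * e t ω l) ^ 2) > ε}).toReal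
      ≤ Real.sqrt (Cf * Ce) / (ε * (T : ℝ) ^ (τ / 2)) := by
  have hTr : (0 : ℝ) < (T : ℝ) := Nat.cast_pos.mpr hT
  set Tp : ℝ := (T : ℝ) ^ (1 + τ) with hTp
  have hTp_pos : 0 < Tp := Real.rpow_pos_of_pos hTr _
  set c : ℝ := 1 / Tp with hc
  have hc_pos : 0 < c := by positivity
  set X : Ω → ℝ := fun ω => Real.sqrt (∑ j, ∑ l, (c * ∑ t, f t ω j * e t ω l) ^ 2) with hX
  -- pointwise bound
  have hXle : ∀ ω, X ω ≤ c * ∑ t, ‖f t ω‖ * ‖e t ω‖ := by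
    intro ω
    have : X ω = c * Real.sqrt (∑ j, ∑ l, (∑ t, f t ω j * e t ω l) ^ 2) := by
      rw [hX]
      simp only [mul_pow, ← Finset.mul_sum]
      rw [Real.sqrt_mul (sq_nonneg c), Real.sqrt_sq hc_pos.le]
    rw [this]
    exact mul_le_mul_of_nonneg_left (aux_tri (fun t => f t ω) (fun t => e t ω)) hc_pos.le
  -- integrability of products
  have hA : ∀ t, Integrable (fun ω => ‖f t ω‖ * ‖e t ω‖) μ := by
    intro t
    have h1 : Integrable (fun ω => ‖f t ω‖ ^ 2) μ := ((hf2 t).norm).integrable_sq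
    have h2 : Integrable (fun ω => ‖e t ω‖ ^ 2) μ := ((he2 t).norm).integrable_sq
    refine (h1.add h2).mono' ((hf2 t).1.norm.mul (he2 t).1.norm) ?_
    filter_upwards with ω
    simp only [Pi.add_apply]
    rw [Real.norm_eq_abs, abs_of_nonneg (by positivity)]
    nlinarith [sq_nonneg (‖f t ω‖ - ‖e t ω‖), norm_nonneg (f t ω), norm_nonneg (e t ω)]
  set B : Ω → ℝ := fun ω => c * ∑ t, ‖f t ω‖ * ‖e t ω‖ with hB
  have hBint : Integrable B μ :=
    (integrable_finset_sum _ fun t _ => hA t).const_mul c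
  -- measurability of X
  have hcf : ∀ (t : Fin T) (j : Fin m), AEStronglyMeasurable (fun ω => f t ω j) μ := by
    intro t j
    exact ((EuclideanSpace.proj j : EuclideanSpace ℝ (Fin m) →L[ℝ] ℝ).continuous).comp_aestronglyMeasurable (hf2 t).1
  have hce : ∀ (t : Fin T) (l : Fin K), AEStronglyMeasurable (fun ω => e t ω l) μ := by
    intro t l
    exact ((EuclideanSpace.proj l : EuclideanSpace ℝ (Fin K) →L[ℝ] ℝ).continuous).comp_aestronglyMeasurable (he2 t).1
  have hXmeas : AEStronglyMeasurable X μ := by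
    apply Real.continuous_sqrt.comp_aestronglyMeasurable
    apply Finset.aestronglyMeasurable_fun_sum
    intro j _
    apply Finset.aestronglyMeasurable_fun_sum
    intro l _
    have hs : AEStronglyMeasurable (fun ω => c * ∑ t, f t ω j * e t ω l) μ :=
      (Finset.aestronglyMeasurable_fun_sum _ fun t _ => (hcf t j).fun_mul (hce t l)).const_mul c
    simpa [pow_two] using hs.fun_mul hs
  have hXint : Integrable X μ := by
    refine hBint.mono' hXmeas ?_
    filter_upwards with ω
    rw [Real.norm_eq_abs, abs_of_nonneg (Real.sqrt_nonneg _)]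
    exact hXle ω
  -- Markov
  have hmarkov := mul_meas_ge_le_integral_of_nonneg
    (Filter.Eventually.of_forall fun ω => Real.sqrt_nonneg _) hXint ε
  have hsub : μ {ω | X ω > ε} ≤ μ {ω | ε ≤ X ω} :=
    measure_mono fun ω (h : ε < X ω) => le_of_lt h
  have hmeas_le : (μ {ω | X ω > ε}).toReal ≤ (∫ ω, X ω ∂μ) / ε := by
    rw [le_div_iff₀ hε]
    calc (μ {ω | X ω > ε}).toReal * ε = ε * (μ {ω | X ω > ε}).toReal := mul_comm _ _
      _ ≤ ε * (μ {ω | ε ≤ X ω}).toReal := by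
          apply mul_le_mul_of_nonneg_left _ hε.le
          exact ENNReal.toReal_mono (measure_ne_top μ _) hsub
      _ ≤ ∫ ω, X ω ∂μ := hmarkov
  -- bound the integral
  have hIf : ∀ t, (0:ℝ) ≤ ∫ ω, ‖f t ω‖ ^ 2 ∂μ := fun t => integral_nonneg fun ω => by positivity
  have hIe : ∀ t, (0:ℝ) ≤ ∫ ω, ‖e t ω‖ ^ 2 ∂μ := fun t => integral_nonneg fun ω => by positivity
  have hprod : ∀ t, ∫ ω, ‖f t ω‖ * ‖e t ω‖ ∂μ
      ≤ Real.sqrt (∫ ω, ‖f t ω‖ ^ 2 ∂μ) * Real.sqrt (∫ ω, ‖e t ω‖ ^ 2 ∂μ) := by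
    intro t
    have hind : IndepFun (fun ω => ‖f t ω‖) (fun ω => ‖e t ω‖) μ :=
      (hindep t).comp measurable_norm measurable_norm
    have heq : ∫ ω, ‖f t ω‖ * ‖e t ω‖ ∂μ = (∫ ω, ‖f t ω‖ ∂μ) * ∫ ω, ‖e t ω‖ ∂μ := by
      have := hind.integral_fun_mul_eq_mul_integral (hf2 t).1.norm (he2 t).1.norm
      simpa [Pi.mul_apply] using this
    rw [heq]
    have h1 := aux_cs μ _ (hf2 t).norm
    have h2 := aux_cs μ _ (he2 t).norm
    exact mul_le_mul h1 h2 (integral_nonneg fun ω => norm_nonneg _) (Real.sqrt_nonneg _)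
  have hint_le : ∫ ω, X ω ∂μ
      ≤ c * (Real.sqrt (∑ t, ∫ ω, ‖f t ω‖ ^ 2 ∂μ) * Real.sqrt (∑ t, ∫ ω, ‖e t ω‖ ^ 2 ∂μ)) := by
    have step1 : ∫ ω, X ω ∂μ ≤ ∫ ω, B ω ∂μ :=
      integral_mono hXint hBint hXle
    have step2 : ∫ ω, B ω ∂μ = c * ∑ t, ∫ ω, ‖f t ω‖ * ‖e t ω‖ ∂μ := by
      rw [hB]
      simp only
      rw [integral_const_mul, integral_finset_sum _ fun t _ => hA t]
    have step3 : ∑ t, ∫ ω, ‖f t ω‖ * ‖e t ω‖ ∂μ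
        ≤ Real.sqrt (∑ t, ∫ ω, ‖f t ω‖ ^ 2 ∂μ) * Real.sqrt (∑ t, ∫ ω, ‖e t ω‖ ^ 2 ∂μ) := by
      have s1 : ∑ t, ∫ ω, ‖f t ω‖ * ‖e t ω‖ ∂μ
          ≤ ∑ t, Real.sqrt (∫ ω, ‖f t ω‖ ^ 2 ∂μ) * Real.sqrt (∫ ω, ‖e t ω‖ ^ 2 ∂μ) :=
        Finset.sum_le_sum fun t _ => hprod t
      have s2 : (∑ t, Real.sqrt (∫ ω, ‖f t ω‖ ^ 2 ∂μ) * Real.sqrt (∫ ω, ‖e t ω‖ ^ 2 ∂μ)) ^ 2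
          ≤ (∑ t, ∫ ω, ‖f t ω‖ ^ 2 ∂μ) * ∑ t, ∫ ω, ‖e t ω‖ ^ 2 ∂μ := by
        have := Finset.sum_mul_sq_le_sq_mul_sq Finset.univ
          (fun t => Real.sqrt (∫ ω, ‖f t ω‖ ^ 2 ∂μ)) (fun t => Real.sqrt (∫ ω, ‖e t ω‖ ^ 2 ∂μ))
        simpa [Real.sq_sqrt (hIf _), Real.sq_sqrt (hIe _)] using this
      have s3 : ∑ t, Real.sqrt (∫ ω, ‖f t ω‖ ^ 2 ∂μ) * Real.sqrt (∫ ω, ‖e t ω‖ ^ 2 ∂μ)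
          ≤ Real.sqrt ((∑ t, ∫ ω, ‖f t ω‖ ^ 2 ∂μ) * ∑ t, ∫ ω, ‖e t ω‖ ^ 2 ∂μ) := by
        have hnn : (0:ℝ) ≤ ∑ t, Real.sqrt (∫ ω, ‖f t ω‖ ^ 2 ∂μ) * Real.sqrt (∫ ω, ‖e t ω‖ ^ 2 ∂μ) :=
          Finset.sum_nonneg fun t _ => mul_nonneg (Real.sqrt_nonneg _) (Real.sqrt_nonneg _)
        calc _ = Real.sqrt ((∑ t, Real.sqrt (∫ ω, ‖f t ω‖ ^ 2 ∂μ) * Real.sqrt (∫ ω, ‖e t ω‖ ^ 2 ∂μ)) ^ 2) :=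
              (Real.sqrt_sq hnn).symm
          _ ≤ _ := Real.sqrt_le_sqrt s2
        done
      rw [Real.sqrt_mul (Finset.sum_nonneg fun t _ => hIf t)] at s3
      linarith
    calc ∫ ω, X ω ∂μ ≤ c * ∑ t, ∫ ω, ‖f t ω‖ * ‖e t ω‖ ∂μ := step2 ▸ step1
      _ ≤ _ := mul_le_mul_of_nonneg_left step3 hc_pos.le
  -- sums bounded by Cf * Tp and Ce * T
  have hsf : ∑ t, ∫ ω, ‖f t ω‖ ^ 2 ∂μ ≤ Cf * Tp := by
    rw [hc] at *
    have := hMf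
    rw [div_mul_eq_mul_div, one_mul, div_le_iff₀ hTp_pos] at this
    linarith
  have hse : ∑ t, ∫ ω, ‖e t ω‖ ^ 2 ∂μ ≤ Ce * (T : ℝ) := by
    rw [div_mul_eq_mul_div, one_mul, div_le_iff₀ hTr] at hMe
    linarith
  have hfinal : c * (Real.sqrt (∑ t, ∫ ω, ‖f t ω‖ ^ 2 ∂μ) * Real.sqrt (∑ t, ∫ ω, ‖e t ω‖ ^ 2 ∂μ))
      ≤ Real.sqrt (Cf * Ce) / (T : ℝ) ^ (τ / 2) := by
    have b1 : Real.sqrt (∑ t, ∫ ω, ‖f t ω‖ ^ 2 ∂μ) ≤ Real.sqrt (Cf * Tp) := Real.sqrt_le_sqrt hsf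
    have b2 : Real.sqrt (∑ t, ∫ ω, ‖e t ω‖ ^ 2 ∂μ) ≤ Real.sqrt (Ce * (T : ℝ)) := Real.sqrt_le_sqrt hse
    have key : c * (Real.sqrt (Cf * Tp) * Real.sqrt (Ce * (T : ℝ)))
        = Real.sqrt (Cf * Ce) / (T : ℝ) ^ (τ / 2) := by
      rw [Real.sqrt_mul hCf, Real.sqrt_mul hCe]
      have e1 : Real.sqrt Tp = (T : ℝ) ^ ((1 + τ) / 2) := by
        rw [hTp, Real.sqrt_eq_rpow, ← Real.rpow_mul hTr.le]
        ring_nf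
      have e2 : Real.sqrt (T : ℝ) = (T : ℝ) ^ ((1 : ℝ) / 2) := Real.sqrt_eq_rpow _
      rw [e1, e2, Real.sqrt_mul hCf]
      have e3 : (T : ℝ) ^ ((1 + τ) / 2) * (T : ℝ) ^ ((1:ℝ) / 2) = (T : ℝ) ^ (1 + τ / 2) := by
        rw [← Real.rpow_add hTr]; ring_nf
      have e4 : Tp = (T : ℝ) ^ (1 + τ / 2) * (T : ℝ) ^ (τ / 2) := by
        rw [hTp, ← Real.rpow_add hTr]; ring_nf
      have hp1 : (0:ℝ) < (T : ℝ) ^ (1 + τ / 2) := Real.rpow_pos_of_pos hTr _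
      have hp2 : (0:ℝ) < (T : ℝ) ^ (τ / 2) := Real.rpow_pos_of_pos hTr _
      have e5 : (T : ℝ) ^ ((1 + τ) / 2) * (T : ℝ) ^ ((1:ℝ) / 2) = (T : ℝ) ^ ((2 + τ) / 2) := by
        rw [← Real.rpow_add hTr]; ring_nf
      rw [hc, e4, ← e3]
      have ha : (0:ℝ) < (T : ℝ) ^ ((1 + τ) / 2) := Real.rpow_pos_of_pos hTr _
      have hb : (0:ℝ) < (T : ℝ) ^ ((1:ℝ) / 2) := Real.rpow_pos_of_pos hTr _
      field_simp
    calc c * (Real.sqrt (∑ t, ∫ ω, ‖f t ω‖ ^ 2 ∂μ) * Real.sqrt (∑ t, ∫ ω, ‖e t ω‖ ^ 2 ∂μ))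
        ≤ c * (Real.sqrt (Cf * Tp) * Real.sqrt (Ce * (T : ℝ))) := by
          apply mul_le_mul_of_nonneg_left _ hc_pos.le
          exact mul_le_mul b1 b2 (Real.sqrt_nonneg _) (Real.sqrt_nonneg _)
      _ = _ := key
  -- conclude
  have hend : (∫ ω, X ω ∂μ) / ε ≤ Real.sqrt (Cf * Ce) / (ε * (T : ℝ) ^ (τ / 2)) := by
    have hp2 : (0:ℝ) < (T : ℝ) ^ (τ / 2) := Real.rpow_pos_of_pos hTr _
    rw [div_le_div_iff₀ hε (by positivity)]
    have := le_trans hint_le hfinal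
    calc (∫ ω, X ω ∂μ) * (ε * (T : ℝ) ^ (τ / 2))
        = ((∫ ω, X ω ∂μ) * (T : ℝ) ^ (τ / 2)) * ε := by ring
      _ ≤ Real.sqrt (Cf * Ce) * ε := by
          apply mul_le_mul_of_nonneg_right _ hε.le
          exact (le_div_iff₀ hp2).mp this
      _ = Real.sqrt (Cf * Ce) * ε := rfl
  exact le_trans hmeas_le hend
end
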